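/- Let R, B ≥ 1 and a ≥ 1 be integers and set n = R + B. For every color word w ∈ {red, black}^n containing exactly R reds, the number of words f : {1,…,n} → {1,…,a} such that w(f) = w equals Σ_{k=1}^{a} Σ_{j=1}^{R} (k-1)^{R-j}·k^{j-1}·(a-k)^{b_w(j)}·(a-k+1)^{B-b_w(j)} (with 0^0 = 1). Hence the probability Q_a(w) that an a-shuffle of the deck with R reds atop B blacks results in the pattern w is this sum divided by a^{R+B}. -/

import Mathlib

/-- Bayer–Diaconis encoding: for a shuffle word `f : Fin n → Fin a`, the card at final
position `i` originally occupied 1-based position `pos f i`. -/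
def pos {n a : ℕ} (f : Fin n → Fin a) (i : Fin n) : ℕ :=
  (Finset.univ.filter fun j => f j < f i).card +
    (Finset.univ.filter fun j => j ≤ i ∧ f j = f i).card

/-- Color pattern of the shuffle word `f` for a deck with the top `R` original positions
red: final position `i` is red (`true`) iff the card there originally sat in the top `R`. -/
def wcolor (R : ℕ) {n a : ℕ} (f : Fin n → Fin a) : Fin n → Bool :=
  fun i => decide (pos f i ≤ R)

/-- Number of red entries of `w` at positions `≤ i`. -/
def numRedsUpTo {n : ℕ} (w : Fin n → Bool) (i : Fin n) : ℕ :=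
  (Finset.univ.filter fun i' => i' ≤ i ∧ w i' = true).card

/-- `bBlack w j`: the number of black entries occurring before the `j`-th red entry of `w`
(a black entry at `i` precedes the `j`-th red iff fewer than `j` reds occur at positions `≤ i`). -/
def bBlack {n : ℕ} (w : Fin n → Bool) (j : ℕ) : ℕ :=
  (Finset.univ.filter fun i => w i = false ∧ numRedsUpTo w i < j).card

namespace BD
open Finset

variable {n a : ℕ}

def cond (w : Fin n → Bool) (f : Fin n → Fin a) : Prop :=
  ∀ i i', w i = true → w i' = false → f i < f i' ∨ (f i = f i' ∧ i < i')

instance (w : Fin n → Bool) : DecidablePred (cond w (a := a)) := fun f => by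
  unfold cond; infer_instance


/-- `j ≼ i` in the stable-sort order. -/
def prec (f : Fin n → Fin a) (i j : Fin n) : Prop :=
  f j < f i ∨ (j ≤ i ∧ f j = f i)

instance (f : Fin n → Fin a) (i : Fin n) : DecidablePred (prec f i) := fun j => by
  unfold prec; infer_instance

lemma pos_eq (f : Fin n → Fin a) (i : Fin n) :
    pos f i = (univ.filter fun j => prec f i j).card := by
  unfold pos prec
  rw [filter_or, card_union_of_disjoint]
  rw [disjoint_filter]
  rintro x - hx ⟨-, hx2⟩
  exact absurd hx2 (ne_of_lt hx)

lemma pos_le_of_cond {w : Fin n → Bool} {f : Fin n → Fin a} (hc : cond w f)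
    {R : ℕ} (hw : (univ.filter fun i => w i = true).card = R)
    {i : Fin n} (hi : w i = true) : pos f i ≤ R := by
  rw [pos_eq, ← hw]
  apply card_le_card
  intro j hj
  simp only [mem_filter, mem_univ, true_and] at hj ⊢
  by_contra hb
  rcases hc i j hi (by simpa using hb) with h | ⟨h1, h2⟩
  · rcases hj with h' | ⟨-, h'⟩
    · exact absurd (h.trans h') (lt_irrefl _)
    · exact absurd h' (ne_of_gt h)
  · rcases hj with h' | ⟨h3, -⟩
    · exact absurd h' (by rw [h1]; exact lt_irrefl _)
    · exact absurd (lt_of_lt_of_le h2 h3) (lt_irrefl _)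

lemma lt_pos_of_cond {w : Fin n → Bool} {f : Fin n → Fin a} (hc : cond w f)
    {R : ℕ} (hw : (univ.filter fun i => w i = true).card = R)
    {i : Fin n} (hi : w i = false) : R < pos f i := by
  rw [pos_eq, ← hw]
  have hsub : insert i (univ.filter fun j => w j = true) ⊆
      univ.filter fun j => prec f i j := by
    intro j hj
    rcases mem_insert.1 hj with rfl | hj
    · exact mem_filter.2 ⟨mem_univ _, Or.inr ⟨le_refl _, rfl⟩⟩
    · simp only [mem_filter, mem_univ, true_and] at hj ⊢
      rcases hc j i hj hi with h | ⟨h1, h2⟩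
      · exact Or.inl h
      · exact Or.inr ⟨le_of_lt h2, h1⟩
  calc (univ.filter fun j => w j = true).card
      < (insert i (univ.filter fun j => w j = true)).card := by
        rw [card_insert_of_notMem (by simp [hi])]; omega
    _ ≤ _ := card_le_card hsub

lemma wcolor_eq_iff_cond {R : ℕ} {w : Fin n → Bool} {f : Fin n → Fin a}
    (hw : (univ.filter fun i => w i = true).card = R) :
    wcolor R f = w ↔ cond w f := by
  constructor
  · intro h
    by_contra hc
    unfold cond at hc
    push_neg at hc
    obtain ⟨i, i', hi, hi', hni, hni2⟩ := hc
    -- f i' < f i ∨ (f i' = f i ∧ i' ≤ i), i.e. prec f i i' "strictly"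
    have hne : i ≠ i' := fun he => by rw [he, hi'] at hi; exact absurd hi (by simp)
    have hstrict : f i' < f i ∨ (f i' = f i ∧ i' < i) := by
      rcases eq_or_lt_of_le hni with h1 | h1
      · exact Or.inr ⟨h1, lt_of_le_of_ne (hni2 h1.symm) hne.symm⟩
      · exact Or.inl h1
    -- pos f i' < pos f i
    have hlt : pos f i' < pos f i := by
      rw [pos_eq, pos_eq]
      apply card_lt_card
      constructor
      · intro j hj
        simp only [mem_filter, mem_univ, true_and] at hj ⊢
        rcases hj with h1 | ⟨h1, h2⟩
        · rcases hstrict with h3 | ⟨h3, h4⟩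
          · exact Or.inl (h1.trans h3)
          · exact Or.inl (h3 ▸ h1)
        · rcases hstrict with h3 | ⟨h3, h4⟩
          · exact Or.inl (h2 ▸ h3)
          · exact Or.inr ⟨h1.trans h4.le, h2.trans h3⟩
      · intro hsub
        have : prec f i' i := by
          have := hsub (mem_filter.2 ⟨mem_univ _, Or.inr ⟨le_refl _, rfl⟩⟩ : i ∈ univ.filter fun j => prec f i j)
          simpa using this
        rcases this with h1 | ⟨h1, h2⟩
        · rcases hstrict with h3 | ⟨h3, -⟩
          · exact absurd (h1.trans h3) (lt_irrefl _)
          · exact absurd h1 (by rw [h3]; exact lt_irrefl _)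
        · rcases hstrict with h3 | ⟨-, h4⟩
          · exact absurd h3 (by rw [h2]; exact lt_irrefl _)
          · exact absurd (lt_of_le_of_lt h1 h4) (lt_irrefl _)
    have hpi : pos f i ≤ R := by
      have := congrFun h i
      simpa [wcolor, hi] using this
    have hpi' : R < pos f i' := by
      have := congrFun h i'
      simp [wcolor, hi'] at this
      omega
    omega
  · intro hc
    funext i
    cases hiw : w i
    · simp only [wcolor]
      have := lt_pos_of_cond hc hw hiw
      simp; omega
    · simp only [wcolor]
      have := pos_le_of_cond hc hw hiw
      simpa using this


def Reds (w : Fin n → Bool) : Finset (Fin n) := univ.filter fun i => w i = true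

def tset (w : Fin n → Bool) (k : Fin a) (r i : Fin n) : Finset (Fin a) :=
  if i = r then {k}
  else if w i = true then (if r < i then Iio k else Iic k)
  else (if i < r then Ioi k else Ici k)

def P (w : Fin n → Bool) (k : Fin a) (r : Fin n) (f : Fin n → Fin a) : Prop :=
  cond w f ∧ f r = k ∧ (∀ i, w i = true → f i ≤ k) ∧
    (∀ i, w i = true → r < i → f i < k)

instance (w : Fin n → Bool) (k : Fin a) (r : Fin n) : DecidablePred (P w k r) := fun f => by
  unfold P cond; infer_instance

lemma P_iff_mem_pi {w : Fin n → Bool} {k : Fin a} {r : Fin n} (hr : w r = true)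
    (f : Fin n → Fin a) : P w k r f ↔ ∀ i, f i ∈ tset w k r i := by
  constructor
  · rintro ⟨hc, hfr, hle, hlt⟩ i
    unfold tset
    by_cases hir : i = r
    · subst hir; simp [hfr]
    · simp only [hir, if_false]
      cases hwi : w i
      · -- black
        simp only [Bool.false_eq_true, if_false]
        rcases hc r i hr hwi with h | ⟨h1, h2⟩
        · by_cases hlt2 : i < r
          · -- need Ioi : k < f i
            simp only [hlt2, if_true, mem_Ioi]; rw [← hfr]; exact h
          · simp only [hlt2, if_false, mem_Ici]; rw [← hfr]; exact le_of_lt h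
        · by_cases hlt2 : i < r
          · exact absurd (h2.trans hlt2) (lt_irrefl _)
          · simp only [hlt2, if_false, mem_Ici]; rw [← hfr, h1]
      · simp only [if_true]
        by_cases hlt2 : r < i
        · simp only [hlt2, if_true, mem_Iio]; exact hlt i hwi hlt2
        · simp only [hlt2, if_false, mem_Iic]; exact hle i hwi
  · intro h
    have hfr : f r = k := by have := h r; simpa [tset] using this
    have hle : ∀ i, w i = true → f i ≤ k := by
      intro i hwi
      have hi := h i
      unfold tset at hi
      by_cases hir : i = r
      · subst hir; rw [hfr]
      · simp only [hir, if_false, hwi, if_true] at hi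
        by_cases hlt2 : r < i
        · simp only [hlt2, if_true, mem_Iio] at hi; exact le_of_lt hi
        · simp only [hlt2, if_false, mem_Iic] at hi; exact hi
    have hlt : ∀ i, w i = true → r < i → f i < k := by
      intro i hwi hri
      have hi := h i
      unfold tset at hi
      have hir : i ≠ r := ne_of_gt hri
      simp only [hir, if_false, hwi, if_true, hri, mem_Iio] at hi
      exact hi
    refine ⟨?_, hfr, hle, hlt⟩
    intro i b hwi hwb
    have hb := h b
    unfold tset at hb
    have hbr : b ≠ r := fun he => by rw [he, hr] at hwb; exact absurd hwb (by simp)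
    simp only [hbr, if_false, hwb, Bool.false_eq_true, if_false] at hb
    by_cases hblt : b < r
    · simp only [hblt, if_true, mem_Ioi] at hb
      exact Or.inl (lt_of_le_of_lt (hle i hwi) hb)
    · simp only [hblt, if_false, mem_Ici] at hb
      rcases lt_or_eq_of_le (hle i hwi) with h1 | h1
      · rcases lt_or_eq_of_le hb with h2 | h2
        · exact Or.inl (h1.trans h2)
        · exact Or.inl (h2 ▸ h1)
      · -- f i = k
        have hir : ¬ r < i := fun hri => absurd h1 (ne_of_lt (hlt i hwi hri))
        have hrb : r < b := lt_of_le_of_ne (not_lt.1 hblt) (Ne.symm hbr)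
        rcases lt_or_eq_of_le hb with h2 | h2
        · exact Or.inl (h1 ▸ h2)
        · exact Or.inr ⟨by rw [h1, h2], lt_of_le_of_lt (not_lt.1 hir) hrb⟩

lemma filter_P_eq {w : Fin n → Bool} {k : Fin a} {r : Fin n} (hr : w r = true) :
    (univ.filter fun f : Fin n → Fin a => P w k r f) = Fintype.piFinset (tset w k r) := by
  ext f
  simp only [mem_filter, mem_univ, true_and, Fintype.mem_piFinset]
  exact P_iff_mem_pi hr f

lemma exists_P {w : Fin n → Bool} {f : Fin n → Fin a} (hc : cond w f)
    (hne : (Reds w).Nonempty) :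
    ∃ k r, r ∈ Reds w ∧ P w k r f := by
  have hne2 : ((Reds w).image f).Nonempty := hne.image f
  set k := ((Reds w).image f).max' hne2 with hk
  have hkmem : k ∈ (Reds w).image f := max'_mem _ _
  obtain ⟨r0, hr0, hfr0⟩ := mem_image.1 hkmem
  have hne3 : ((Reds w).filter fun i => f i = k).Nonempty := ⟨r0, mem_filter.2 ⟨hr0, hfr0⟩⟩
  set r := ((Reds w).filter fun i => f i = k).max' hne3 with hrr
  have hrmem := max'_mem _ hne3
  rw [mem_filter] at hrmem
  refine ⟨k, r, hrmem.1, hc, hrmem.2, ?_, ?_⟩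
  · intro i hwi
    exact le_max' _ _ (mem_image.2 ⟨i, by simp [Reds, hwi], rfl⟩)
  · intro i hwi hri
    rcases lt_or_eq_of_le (le_max' _ (f i) (mem_image.2 ⟨i, by simp [Reds, hwi], rfl⟩) : f i ≤ k)
      with h | h
    · exact h
    · exfalso
      have : i ≤ r := by
        rw [hrr]
        exact le_max' ((Reds w).filter fun i => f i = k) i
          (mem_filter.2 ⟨by simp [Reds, hwi], h⟩)
      exact absurd (lt_of_lt_of_le hri this) (lt_irrefl _)

lemma unique_P {w : Fin n → Bool} {f : Fin n → Fin a} {k k' : Fin a} {r r' : Fin n}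
    (hr : w r = true) (hr' : w r' = true)
    (h1 : P w k r f) (h2 : P w k' r' f) : k = k' ∧ r = r' := by
  obtain ⟨-, hfr, hle, hlt⟩ := h1
  obtain ⟨-, hfr', hle', hlt'⟩ := h2
  have hkk : k = k' := le_antisymm (hfr ▸ hle' r hr) (hfr' ▸ hle r' hr')
  subst hkk
  refine ⟨rfl, ?_⟩
  rcases lt_trichotomy r r' with h | h | h
  · exact absurd hfr' (ne_of_lt (hlt r' hr' h))
  · exact h
  · exact absurd hfr (ne_of_lt (hlt' r hr h))


-- cardinality lemmas
lemma numRedsUpTo_mono (w : Fin n → Bool) {i i' : Fin n} (h : i ≤ i') :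
    numRedsUpTo w i ≤ numRedsUpTo w i' := by
  apply card_le_card
  intro x hx
  simp only [mem_filter, mem_univ, true_and] at hx ⊢
  exact ⟨hx.1.trans h, hx.2⟩

lemma numRedsUpTo_lt_iff {w : Fin n → Bool} {r : Fin n} (hr : w r = true) (i : Fin n) :
    numRedsUpTo w i < numRedsUpTo w r ↔ i < r := by
  constructor
  · intro h
    by_contra hc
    exact absurd (numRedsUpTo_mono w (not_lt.1 hc)) (by omega)
  · intro h
    apply card_lt_card
    constructor
    · intro x hx
      simp only [mem_filter, mem_univ, true_and] at hx ⊢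
      exact ⟨hx.1.trans h.le, hx.2⟩
    · intro hc
      have := hc (mem_filter.2 ⟨mem_univ r, le_refl r, hr⟩)
      simp only [mem_filter, mem_univ, true_and] at this
      exact absurd (lt_of_le_of_lt this.1 h) (lt_irrefl _)

lemma L0 {w : Fin n → Bool} {r : Fin n} (hr : w r = true) :
    (univ.filter fun i => w i = true ∧ i < r).card + 1 = numRedsUpTo w r := by
  unfold numRedsUpTo
  have he : (univ.filter fun i' => i' ≤ r ∧ w i' = true)
      = insert r (univ.filter fun i => w i = true ∧ i < r) := by
    ext i
    simp only [mem_filter, mem_univ, true_and, mem_insert]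
    constructor
    · rintro ⟨h1, h2⟩
      rcases eq_or_lt_of_le h1 with h | h
      · exact Or.inl h
      · exact Or.inr ⟨h2, h⟩
    · rintro (rfl | ⟨h1, h2⟩)
      · exact ⟨le_refl _, hr⟩
      · exact ⟨h2.le, h1⟩
  rw [he, card_insert_of_notMem (by simp)]

lemma L2 {w : Fin n → Bool} {r : Fin n} :
    numRedsUpTo w r + (univ.filter fun i => w i = true ∧ r < i).card
      = (univ.filter fun i => w i = true).card := by
  unfold numRedsUpTo
  rw [← card_union_of_disjoint]
  · congr 1
    ext i
    simp only [mem_union, mem_filter, mem_univ, true_and]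
    constructor
    · rintro (⟨-, h⟩ | ⟨h, -⟩) <;> exact h
    · intro h
      rcases le_or_gt i r with h2 | h2
      · exact Or.inl ⟨h2, h⟩
      · exact Or.inr ⟨h, h2⟩
  · rw [disjoint_left]
    rintro x hx1 hx2
    simp only [mem_filter, mem_univ, true_and] at hx1 hx2
    exact absurd (lt_of_le_of_lt hx1.1 hx2.2) (lt_irrefl _)

lemma L3 {w : Fin n → Bool} {r : Fin n} (hr : w r = true) :
    (univ.filter fun i => w i = false ∧ i < r).card = bBlack w (numRedsUpTo w r) := by
  unfold bBlack
  congr 1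
  apply filter_congr
  intro i _
  constructor
  · rintro ⟨h1, h2⟩
    exact ⟨h1, (numRedsUpTo_lt_iff hr i).2 h2⟩
  · rintro ⟨h1, h2⟩
    exact ⟨h1, (numRedsUpTo_lt_iff hr i).1 h2⟩

lemma L4 {w : Fin n → Bool} {r : Fin n} (hr : w r = true) :
    (univ.filter fun i => w i = false ∧ i < r).card
      + (univ.filter fun i => w i = false ∧ r < i).card
      = (univ.filter fun i => w i = false).card := by
  rw [← card_union_of_disjoint]
  · congr 1
    ext i
    simp only [mem_union, mem_filter, mem_univ, true_and]
    constructor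
    · rintro (⟨h, -⟩ | ⟨h, -⟩) <;> exact h
    · intro h
      have hir : i ≠ r := fun he => by rw [he, hr] at h; exact absurd h (by simp)
      rcases hir.lt_or_gt with h2 | h2
      · exact Or.inl ⟨h, h2⟩
      · exact Or.inr ⟨h, h2⟩
  · rw [disjoint_left]
    rintro x hx1 hx2
    simp only [mem_filter, mem_univ, true_and] at hx1 hx2
    exact absurd (hx1.2.trans hx2.2) (lt_irrefl _)

lemma prod_tset {w : Fin n → Bool} {k : Fin a} {r : Fin n} (hr : w r = true) :
    ∏ i, (tset w k r i).card =
      (k : ℕ) ^ ((univ.filter fun i => w i = true ∧ r < i).card) *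
      ((k : ℕ) + 1) ^ ((univ.filter fun i => w i = true ∧ i < r).card) *
      (a - 1 - (k : ℕ)) ^ ((univ.filter fun i => w i = false ∧ i < r).card) *
      (a - (k : ℕ)) ^ ((univ.filter fun i => w i = false ∧ r < i).card) := by
  classical
  set c := fun i => (tset w k r i).card with hc
  set A1 := univ.filter fun i : Fin n => w i = true ∧ r < i with hA1
  set A2 := univ.filter fun i : Fin n => w i = true ∧ i < r with hA2
  set A3 := univ.filter fun i : Fin n => w i = false ∧ i < r with hA3
  set A4 := univ.filter fun i : Fin n => w i = false ∧ r < i with hA4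
  have hU : univ.erase r = (A1 ∪ A2) ∪ (A3 ∪ A4) := by
    ext i
    simp only [hA1, hA2, hA3, hA4, mem_erase, mem_univ, and_true, mem_union, mem_filter,
      true_and]
    constructor
    · intro hir
      cases hwi : w i
      · rcases hir.lt_or_gt with h | h
        · exact Or.inr (Or.inl ⟨rfl, h⟩)
        · exact Or.inr (Or.inr ⟨rfl, h⟩)
      · rcases hir.lt_or_gt with h | h
        · exact Or.inl (Or.inr ⟨rfl, h⟩)
        · exact Or.inl (Or.inl ⟨rfl, h⟩)
    · rintro ((⟨-, h⟩ | ⟨-, h⟩) | (⟨-, h⟩ | ⟨-, h⟩))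
      · exact ne_of_gt h
      · exact ne_of_lt h
      · exact ne_of_lt h
      · exact ne_of_gt h
  have hD12 : Disjoint A1 A2 := by
    rw [disjoint_left]
    rintro x hx1 hx2
    simp only [hA1, hA2, mem_filter, mem_univ, true_and] at hx1 hx2
    exact absurd (hx1.2.trans hx2.2) (lt_irrefl _)
  have hD34 : Disjoint A3 A4 := by
    rw [disjoint_left]
    rintro x hx1 hx2
    simp only [hA3, hA4, mem_filter, mem_univ, true_and] at hx1 hx2
    exact absurd (hx1.2.trans hx2.2) (lt_irrefl _)
  have hD : Disjoint (A1 ∪ A2) (A3 ∪ A4) := by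
    rw [disjoint_left]
    rintro x hx1 hx2
    simp only [hA1, hA2, hA3, hA4, mem_union, mem_filter, mem_univ, true_and] at hx1 hx2
    rcases hx1 with ⟨h, -⟩ | ⟨h, -⟩ <;> rcases hx2 with ⟨h', -⟩ | ⟨h', -⟩ <;>
      simp [h] at h'
  have hcr : c r = 1 := by simp [hc, tset]
  have e1 : ∏ i ∈ A1, c i = (k : ℕ) ^ A1.card := by
    rw [← prod_const]
    apply prod_congr rfl
    intro i hi
    rw [hA1, mem_filter] at hi
    obtain ⟨-, hwi, hlt⟩ := hi
    simp [hc, tset, (ne_of_gt hlt : i ≠ r), hwi, hlt]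
  have e2 : ∏ i ∈ A2, c i = ((k : ℕ) + 1) ^ A2.card := by
    rw [← prod_const]
    apply prod_congr rfl
    intro i hi
    rw [hA2, mem_filter] at hi
    obtain ⟨-, hwi, hlt⟩ := hi
    simp [hc, tset, (ne_of_lt hlt : i ≠ r), hwi, not_lt_of_gt hlt]
  have e3 : ∏ i ∈ A3, c i = (a - 1 - (k : ℕ)) ^ A3.card := by
    rw [← prod_const]
    apply prod_congr rfl
    intro i hi
    rw [hA3, mem_filter] at hi
    obtain ⟨-, hwi, hlt⟩ := hi
    simp [hc, tset, (ne_of_lt hlt : i ≠ r), hwi, hlt]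
  have e4 : ∏ i ∈ A4, c i = (a - (k : ℕ)) ^ A4.card := by
    rw [← prod_const]
    apply prod_congr rfl
    intro i hi
    rw [hA4, mem_filter] at hi
    obtain ⟨-, hwi, hlt⟩ := hi
    simp [hc, tset, (ne_of_gt hlt : i ≠ r), hwi, not_lt_of_gt hlt]
  calc ∏ i, c i = c r * ∏ i ∈ univ.erase r, c i := (mul_prod_erase univ c (mem_univ r)).symm
    _ = c r * (((∏ i ∈ A1, c i) * ∏ i ∈ A2, c i) * ((∏ i ∈ A3, c i) * ∏ i ∈ A4, c i)) := by
        rw [hU, prod_union hD, prod_union hD12, prod_union hD34]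
    _ = _ := by rw [hcr, e1, e2, e3, e4]; ring


lemma sum_reds {w : Fin n → Bool} {R : ℕ} (hw : (univ.filter fun i => w i = true).card = R)
    (g : ℕ → ℕ) : ∑ r ∈ Reds w, g (numRedsUpTo w r) = ∑ j ∈ Icc 1 R, g j := by
  have hmem : ∀ r ∈ Reds w, numRedsUpTo w r ∈ Icc 1 R := by
    intro r hr
    rw [mem_Icc]
    have hr' : w r = true := (mem_filter.1 hr).2
    constructor
    · have : 0 < numRedsUpTo w r :=
        card_pos.2 ⟨r, mem_filter.2 ⟨mem_univ r, le_refl r, hr'⟩⟩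
      omega
    · rw [← hw]
      exact card_le_card fun x hx =>
        mem_filter.2 ⟨mem_univ x, ((mem_filter.1 hx).2).2⟩
  have hinj : ∀ r1 ∈ Reds w, ∀ r2 ∈ Reds w,
      numRedsUpTo w r1 = numRedsUpTo w r2 → r1 = r2 := by
    intro r1 h1 r2 h2 heq
    by_contra hne
    rcases Ne.lt_or_gt hne with h | h
    · have := (numRedsUpTo_lt_iff ((mem_filter.1 h2).2) r1).2 h
      omega
    · have := (numRedsUpTo_lt_iff ((mem_filter.1 h1).2) r2).2 h
      omega
  apply sum_bij (i := fun r _ => numRedsUpTo w r)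
  · exact hmem
  · intro r1 h1 r2 h2 heq
    exact hinj r1 h1 r2 h2 heq
  · intro j hj
    obtain ⟨r, hr, heq⟩ := Finset.surj_on_of_inj_on_of_card_le
      (fun r _ => numRedsUpTo w r) hmem (fun r1 r2 h1 h2 he => hinj r1 h1 r2 h2 he)
      (by unfold Reds; rw [hw, Nat.card_Icc]; omega) j hj
    exact ⟨r, hr, heq.symm⟩
  · intro r hr
    rfl

lemma icc_shift (a : ℕ) (H : ℕ → ℕ) :
    ∑ k : Fin a, H ((k : ℕ) + 1) = ∑ k ∈ Icc 1 a, H k := by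
  rw [Fin.sum_univ_eq_sum_range (fun m => H (m + 1)) a,
    show Icc 1 a = Ico 1 (a + 1) from (Finset.Ico_add_one_right_eq_Icc ..).symm,
    Finset.sum_Ico_eq_sum_range]
  simp [Nat.add_comm]

end BD

theorem statement6' (R B a : ℕ) (hR : 1 ≤ R) (hB : 1 ≤ B) (ha : 1 ≤ a)
    (w : Fin (R + B) → Bool)
    (hw : (Finset.univ.filter fun i => w i = true).card = R) :
    (Finset.univ.filter fun f : Fin (R + B) → Fin a => wcolor R f = w).card =
      (∑ k ∈ Finset.Icc 1 a, ∑ j ∈ Finset.Icc 1 R,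
        (k - 1) ^ (R - j) * k ^ (j - 1) * (a - k) ^ (bBlack w j) *
          (a - k + 1) ^ (B - bBlack w j)) := by
  classical
  open Finset in
  have hwc : (univ.filter fun f : Fin (R + B) → Fin a => wcolor R f = w)
      = univ.filter fun f : Fin (R + B) → Fin a => BD.cond w f :=
    filter_congr fun f _ => BD.wcolor_eq_iff_cond hw
  have hRne : (BD.Reds w).Nonempty := by
    rw [← card_pos, BD.Reds, hw]
    omega
  have hSU : (univ.filter fun f : Fin (R + B) → Fin a => BD.cond w f)
      = ((univ : Finset (Fin a)) ×ˢ BD.Reds w).biUnion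
          (fun p => univ.filter fun f => BD.P w p.1 p.2 f) := by
    ext f
    constructor
    · intro hf
      have hc : BD.cond w f := (mem_filter.1 hf).2
      obtain ⟨k, r, hrmem, hP⟩ := BD.exists_P hc hRne
      exact mem_biUnion.2 ⟨(k, r), mem_product.2 ⟨mem_univ _, hrmem⟩,
        mem_filter.2 ⟨mem_univ _, hP⟩⟩
    · intro hf
      obtain ⟨p, -, hP⟩ := mem_biUnion.1 hf
      exact mem_filter.2 ⟨mem_univ _, (mem_filter.1 hP).2.1⟩
  have hdisj : (↑((univ : Finset (Fin a)) ×ˢ BD.Reds w) : Set (Fin a × Fin (R + B))).PairwiseDisjoint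
      (fun p => univ.filter fun f : Fin (R + B) → Fin a => BD.P w p.1 p.2 f) := by
    rintro p hp q hq hne
    simp only [mem_coe, mem_product] at hp hq
    have hpr : w p.2 = true := (mem_filter.1 hp.2).2
    have hqr : w q.2 = true := (mem_filter.1 hq.2).2
    rw [Function.onFun, disjoint_left]
    intro f hf1 hf2
    rw [mem_filter] at hf1 hf2
    obtain ⟨hk, hr⟩ := BD.unique_P hpr hqr hf1.2 hf2.2
    exact hne (Prod.ext hk hr)
  rw [hwc, hSU, card_biUnion hdisj]
  have hblacks : (univ.filter fun i : Fin (R + B) => w i = false).card = B := by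
    have h1 := card_filter_add_card_filter_not
      (s := (univ : Finset (Fin (R + B)))) (p := fun i => w i = true)
    have h2 : (univ.filter fun i : Fin (R + B) => ¬ w i = true)
        = univ.filter fun i : Fin (R + B) => w i = false := by
      apply filter_congr
      intro i _
      simp
    rw [h2, hw, card_univ] at h1
    simp at h1
    omega
  have hsum : ∀ p ∈ (univ : Finset (Fin a)) ×ˢ BD.Reds w,
      (univ.filter fun f : Fin (R + B) → Fin a => BD.P w p.1 p.2 f).card
        = ((p.1.val + 1) - 1) ^ (R - numRedsUpTo w p.2) *
            (p.1.val + 1) ^ (numRedsUpTo w p.2 - 1) *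
            (a - (p.1.val + 1)) ^ (bBlack w (numRedsUpTo w p.2)) *
            (a - (p.1.val + 1) + 1) ^ (B - bBlack w (numRedsUpTo w p.2)) := by
    intro p hp
    simp only [mem_product] at hp
    set k := p.1 with hk
    set r := p.2 with hrdef
    have hr : w r = true := (mem_filter.1 hp.2).2
    rw [BD.filter_P_eq hr, Fintype.card_piFinset, BD.prod_tset hr]
    have h0 := BD.L0 hr
    have h2 := BD.L2 (w := w) (r := r)
    rw [hw] at h2
    have h3 := BD.L3 hr
    have h4 := BD.L4 hr
    rw [hblacks] at h4
    have hklt : (k : ℕ) < a := k.isLt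
    have e1 : (univ.filter fun i => w i = true ∧ r < i).card = R - numRedsUpTo w r := by omega
    have e2 : (univ.filter fun i => w i = true ∧ i < r).card = numRedsUpTo w r - 1 := by omega
    have e4 : (univ.filter fun i => w i = false ∧ r < i).card
        = B - bBlack w (numRedsUpTo w r) := by omega
    rw [e1, e2, h3, e4]
    have b1 : ((k : ℕ) + 1) - 1 = (k : ℕ) := by omega
    have b2 : a - ((k : ℕ) + 1) = a - 1 - (k : ℕ) := by omega
    have b3 : a - ((k : ℕ) + 1) + 1 = a - (k : ℕ) := by omega
    rw [b1, b3, b2]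
  rw [sum_congr rfl hsum, Finset.sum_product]
  have hinner : ∀ k : Fin a,
      (∑ r ∈ BD.Reds w,
        ((k.val + 1) - 1) ^ (R - numRedsUpTo w r) *
          (k.val + 1) ^ (numRedsUpTo w r - 1) *
          (a - (k.val + 1)) ^ (bBlack w (numRedsUpTo w r)) *
          (a - (k.val + 1) + 1) ^ (B - bBlack w (numRedsUpTo w r)))
      = ∑ j ∈ Icc 1 R,
          ((k.val + 1) - 1) ^ (R - j) * (k.val + 1) ^ (j - 1) *
            (a - (k.val + 1)) ^ (bBlack w j) * (a - (k.val + 1) + 1) ^ (B - bBlack w j) :=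
    fun k => BD.sum_reds hw fun j =>
      ((k.val + 1) - 1) ^ (R - j) * (k.val + 1) ^ (j - 1) *
        (a - (k.val + 1)) ^ (bBlack w j) * (a - (k.val + 1) + 1) ^ (B - bBlack w j)
  rw [sum_congr rfl fun k _ => hinner k]
  exact BD.icc_shift a fun m => ∑ j ∈ Icc 1 R,
    (m - 1) ^ (R - j) * m ^ (j - 1) * (a - m) ^ (bBlack w j) * (a - m + 1) ^ (B - bBlack w j)


/-- The number of shuffle words producing the color pattern `w` from the deck of `R` reds
atop `B` blacks, and hence the probability `Q_a(w)`. -/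
theorem statement6 (R B a : ℕ) (hR : 1 ≤ R) (hB : 1 ≤ B) (ha : 1 ≤ a)
    (w : Fin (R + B) → Bool)
    (hw : (Finset.univ.filter fun i => w i = true).card = R) :
    (Finset.univ.filter fun f : Fin (R + B) → Fin a => wcolor R f = w).card =
      (∑ k ∈ Finset.Icc 1 a, ∑ j ∈ Finset.Icc 1 R,
        (k - 1) ^ (R - j) * k ^ (j - 1) * (a - k) ^ (bBlack w j) *
          (a - k + 1) ^ (B - bBlack w j)) ∧
    (((Finset.univ.filter fun f : Fin (R + B) → Fin a => wcolor R f = w).card : ℝ) /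
        (a : ℝ) ^ (R + B) =
      ((∑ k ∈ Finset.Icc 1 a, ∑ j ∈ Finset.Icc 1 R,
        (k - 1) ^ (R - j) * k ^ (j - 1) * (a - k) ^ (bBlack w j) *
          (a - k + 1) ^ (B - bBlack w j) : ℕ) : ℝ) / (a : ℝ) ^ (R + B)) := by
  have h := statement6' R B a hR hB ha w hw
  exact ⟨h, by rw [h]⟩
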